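/- Gates exist for P-convex sets: let (S,P) be a set with walls, let Ĉ ⊆ X̂ be a nonempty P-convex set, and let z ∈ X̂. Define an orientation w of the walls by w(h) = z(h) if some v ∈ Ĉ has v(h) = z(h), and w(h) = the halfspace of h opposite to z(h) if every v ∈ Ĉ has v(h) ≠ z(h). Then w is an ultrafilter and w ∈ Ĉ. -/
import Mathlib


open Set

namespace WallDuality

variable {S : Type*}

/-- A wall on `S`, recorded as the unordered pair of its two complementary halfspaces. -/
def IsWall (h : Set (Set S)) : Prop := ∃ A : Set S, h = {A, Aᶜ}

/-- A set with walls: every element of `P` is a wall on `S`. -/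
def IsWallSystem (P : Set (Set (Set S))) : Prop := ∀ h ∈ P, IsWall h

variable (P : Set (Set (Set S)))

/-- An ultrafilter on `P`: a consistent choice of a halfspace of each wall of `P`. -/
def IsUltra (x : ↥P → Set S) : Prop :=
  (∀ w : ↥P, x w ∈ w.1) ∧
    ∀ (w₁ w₂ : ↥P) (A B : Set S), A ∈ w₁.1 → B ∈ w₂.1 → A ⊆ B → x w₁ = A → x w₂ = B

/-- The set `X̂` of all ultrafilters on `P`. -/
def hatX : Set (↥P → Set S) := {x | IsUltra P x}

/-- The principal ultrafilter of a point `s`: each wall is oriented towards `s`. -/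
def principalUF (s : S) : ↥P → Set S := fun w => ⋃₀ {A | A ∈ w.1 ∧ s ∈ A}

/-- The pseudodistance associated with a collection `C` of subsets of `P`:
the supremum of the cardinalities of members of `C` all of whose walls separate
the two orientations. -/
noncomputable def wallDist (C : Set (Set ↥P)) (x y : ↥P → Set S) : ℕ∞ :=
  ⨆ c ∈ {c | c ∈ C ∧ ∀ w ∈ c, x w ≠ y w}, c.encard

/-- A dualisable system on `(S, P)`. -/
structure IsDualisable (C : Set (Set ↥P)) : Prop where
  singleton_mem : ∀ w : ↥P, ({w} : Set ↥P) ∈ C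
  subset_mem : ∀ c ∈ C, ∀ c' ⊆ c, c' ∈ C
  bounded : ∀ s t : S, ∃ M : ℕ, ∀ c ∈ C,
    (∀ w ∈ c, principalUF P s w ≠ principalUF P t w) → c.encard ≤ (M : ℕ∞)

/-- The dual space `X_C`: ultrafilters at finite distance from all principal ones. -/
def dualSpace (C : Set (Set ↥P)) : Set (↥P → Set S) :=
  {x | IsUltra P x ∧ ∀ s : S, wallDist P C x (principalUF P s) ≠ ⊤}

/-- The majority-vote median of three orientations. -/
def medianUF (x y z : ↥P → Set S) : ↥P → Set S :=
  fun w => x w ∩ y w ∪ x w ∩ z w ∪ y w ∩ z w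

/-- A `P`-convex subset of `X̂`: an intersection of halfspaces. -/
def IsPConvex (C' : Set (↥P → Set S)) : Prop :=
  ∃ (Q : Set ↥P) (σ : ↥P → Set S), (∀ w ∈ Q, σ w ∈ w.1) ∧
    C' = {v | IsUltra P v ∧ ∀ w ∈ Q, v w = σ w}

open scoped Classical in
/-- The gate of `z` to a set `C'` of orientations: reverse the orientation of exactly
those walls that separate `z` from `C'`. -/
noncomputable def gateUF (C' : Set (↥P → Set S)) (z : ↥P → Set S) : ↥P → Set S :=
  fun w => if ∃ v ∈ C', v w = z w then z w else (z w)ᶜ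

/-- `A` is gated in `Y` (with respect to the majority-vote median). -/
def IsGatedIn (Y A : Set (↥P → Set S)) : Prop :=
  ∀ x ∈ Y, ∃! g, g ∈ A ∧ ∀ a ∈ A, medianUF P a g x = g

/-- `σ` is a nested choice of halfspaces witnessing that `c` is a chain. -/
def IsChainOrder (σ : ↥P → Set S) (c : Set ↥P) : Prop :=
  (∀ w ∈ c, σ w ∈ w.1) ∧ ∀ w₁ ∈ c, ∀ w₂ ∈ c, σ w₁ ⊆ σ w₂ ∨ σ w₂ ⊆ σ w₁

/-- A chain of walls. -/
def IsWallChain (c : Set ↥P) : Prop := ∃ σ, IsChainOrder P σ c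

/-- A system of chains: a dualisable system all of whose members are chains. -/
def IsChainSystem (C : Set (Set ↥P)) : Prop :=
  IsDualisable P C ∧ ∀ c ∈ C, IsWallChain P c

/-- `C` is `m`-gluable: two members of `C`, one entirely preceding the other and with
union a chain, can be glued after removing at most `m` consecutive walls taken from
the last `m` walls of the first and the first `m` walls of the second. -/
def IsGluable (C : Set (Set ↥P)) (m : ℕ) : Prop :=
  ∀ c₁ ∈ C, ∀ c₂ ∈ C, ∀ σ : ↥P → Set S,
    IsChainOrder P σ (c₁ ∪ c₂) → Disjoint c₁ c₂ →
    (∀ w₁ ∈ c₁, ∀ w₂ ∈ c₂, σ w₁ ⊆ σ w₂) →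
    ∃ b ⊆ c₁ ∪ c₂,
      b.encard ≤ (m : ℕ∞) ∧
      (∀ w ∈ b ∩ c₁, {w' | w' ∈ c₁ ∧ σ w ⊂ σ w'}.encard < (m : ℕ∞)) ∧
      (∀ w ∈ b ∩ c₂, {w' | w' ∈ c₂ ∧ σ w' ⊂ σ w}.encard < (m : ℕ∞)) ∧
      (∀ w₁ ∈ b, ∀ w₂ ∈ b, ∀ w ∈ c₁ ∪ c₂, σ w₁ ⊆ σ w → σ w ⊆ σ w₂ → w ∈ b) ∧
      (c₁ ∪ c₂) \ b ∈ C

/-- The ball of radius `r` about `x` in `X_C`. -/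
def ballX (C : Set (Set ↥P)) (x : ↥P → Set S) (r : ℕ∞) : Set (↥P → Set S) :=
  {z | z ∈ dualSpace P C ∧ wallDist P C x z ≤ r}

/-- The normal wall path: the gate of `y` to the ball of radius `r` about `x`. -/
noncomputable def nwp (C : Set (Set ↥P)) (x y : ↥P → Set S) (r : ℕ) : ↥P → Set S :=
  gateUF P (ballX P C x (r : ℕ∞)) y

/-- Two walls cross: all four quarterspaces are nonempty. -/
def Crosses (w₁ w₂ : ↥P) : Prop := ∀ A ∈ w₁.1, ∀ B ∈ w₂.1, (A ∩ B).Nonempty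

/-- `C` is `L`-separated. -/
def IsSeparated (C : Set (Set ↥P)) (L : ℕ) : Prop :=
  ∀ w₁ w₂ : ↥P, w₁ ≠ w₂ → ({w₁, w₂} : Set ↥P) ∈ C →
    ∀ c ∈ C, (∀ w ∈ c, Crosses P w w₁ ∧ Crosses P w w₂) → c.encard ≤ (L : ℕ∞)

end WallDuality

namespace WallDuality

lemma wall_compl_mem {S : Type*} {h : Set (Set S)} (hw : IsWall h) {u : Set S}
    (hu : u ∈ h) : uᶜ ∈ h := by
  obtain ⟨A, rfl⟩ := hw
  rcases hu with rfl | rfl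
  · exact Or.inr rfl
  · exact Or.inl (compl_compl A)

lemma wall_eq_or_compl {S : Type*} {h : Set (Set S)} (hw : IsWall h) {u v : Set S}
    (hu : u ∈ h) (hv : v ∈ h) (hne : v ≠ u) : v = uᶜ := by
  obtain ⟨A, rfl⟩ := hw
  rcases hu with rfl | rfl <;> rcases hv with rfl | rfl <;>
    simp_all [compl_compl]

/-- **Gates** (Proposition 3.8): for a nonempty `P`-convex set `C'` and an
ultrafilter `z`, the orientation obtained from `z` by reversing exactly the walls
separating `z` from `C'` is an ultrafilter lying in `C'`. -/
theorem gate_is_ultrafilter_mem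
    {S : Type*} (P : Set (Set (Set S))) (hP : IsWallSystem P)
    (C' : Set (↥P → Set S)) (hconv : IsPConvex P C') (hne : C'.Nonempty)
    (z : ↥P → Set S) (hz : IsUltra P z) :
    IsUltra P (gateUF P C' z) ∧ gateUF P C' z ∈ C' := by
  classical
  obtain ⟨Q, σ, hσ, rfl⟩ := hconv
  obtain ⟨v₀, hv₀u, hv₀Q⟩ := hne
  set C' : Set (↥P → Set S) :=
    {v | IsUltra P v ∧ ∀ w ∈ Q, v w = σ w} with hC'
  have hgpos : ∀ w : ↥P, (∃ v ∈ C', v w = z w) → gateUF P C' z w = z w := by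
    intro w hc
    simp only [gateUF, if_pos hc]
  have hgneg : ∀ w : ↥P, ¬(∃ v ∈ C', v w = z w) → gateUF P C' z w = (z w)ᶜ := by
    intro w hc
    simp only [gateUF, if_neg hc]
  -- in the negative case, every v ∈ C' has v w = (z w)ᶜ
  have hneg_all : ∀ w : ↥P, ¬(∃ v ∈ C', v w = z w) →
      ∀ v ∈ C', v w = (z w)ᶜ := by
    intro w hc v hv
    have hne : v w ≠ z w := fun h => hc ⟨v, hv, h⟩
    exact wall_eq_or_compl (hP w.1 w.2) (hz.1 w) (hv.1.1 w) hne
  have hmem : ∀ w : ↥P, gateUF P C' z w ∈ w.1 := by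
    intro w
    by_cases hc : ∃ v ∈ C', v w = z w
    · rw [hgpos w hc]; exact hz.1 w
    · rw [hgneg w hc]; exact wall_compl_mem (hP w.1 w.2) (hz.1 w)
  have hultra : IsUltra P (gateUF P C' z) := by
    refine ⟨hmem, ?_⟩
    intro w₁ w₂ A B hA hB hAB hgA
    by_cases hc₁ : ∃ v ∈ C', v w₁ = z w₁
    · -- gate agrees with z on w₁
      obtain ⟨v₁, hv₁, hv₁z⟩ := hc₁
      rw [hgpos w₁ ⟨v₁, hv₁, hv₁z⟩] at hgA
      have hzB : z w₂ = B := hz.2 w₁ w₂ A B hA hB hAB hgA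
      have hv₁B : v₁ w₂ = B := hv₁.1.2 w₁ w₂ A B hA hB hAB (hv₁z.trans hgA)
      have : ∃ v ∈ C', v w₂ = z w₂ := ⟨v₁, hv₁, hv₁B.trans hzB.symm⟩
      rw [hgpos w₂ this]; exact hzB
    · rw [hgneg w₁ hc₁] at hgA
      have hvB : ∀ v ∈ C', v w₂ = B := by
        intro v hv
        exact hv.1.2 w₁ w₂ A B hA hB hAB ((hneg_all w₁ hc₁ v hv).trans hgA)
      by_cases hc₂ : ∃ v ∈ C', v w₂ = z w₂
      · obtain ⟨v, hv, hvz⟩ := hc₂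
        rw [hgpos w₂ ⟨v, hv, hvz⟩]
        exact hvz.symm.trans (hvB v hv)
      · rw [hgneg w₂ hc₂]
        exact (hneg_all w₂ hc₂ v₀ ⟨hv₀u, hv₀Q⟩).symm.trans (hvB v₀ ⟨hv₀u, hv₀Q⟩)
  refine ⟨hultra, hultra, ?_⟩
  intro w hw
  by_cases hc : ∃ v ∈ C', v w = z w
  · obtain ⟨v, hv, hvz⟩ := hc
    rw [hgpos w ⟨v, hv, hvz⟩]
    exact hvz.symm.trans (hv.2 w hw)
  · rw [hgneg w hc]
    exact (hneg_all w hc v₀ ⟨hv₀u, hv₀Q⟩).symm.trans (hv₀Q w hw)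

end WallDuality
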